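/- Fix k ≥ 1. There exists a constant C (depending only on k) such that for all positive integers n and b, the number Q_{k,4}^b of quadruples (π₁, π₂, π₃, π₄) of W-circuits of length 2k (with vertices in {1,…,n}) that are jointly matched and cross-matched and have exactly b distinct edge values across all four circuits satisfies Q_{k,4}^b ≤ C · n^{b+2}. -/

import Mathlib

open MeasureTheory ProbabilityTheory Filter Topology Matrix
open scoped ENNReal NNReal BigOperators Classical

noncomputable section

/-- The empirical spectral distribution of a Hermitian (real symmetric) matrix. -/
def esd {m : ℕ} (A : Matrix (Fin m) (Fin m) ℝ) (hA : A.IsHermitian) : Measure ℝ :=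
  ((m : ℝ≥0∞))⁻¹ • ∑ i : Fin m, Measure.dirac (hA.eigenvalues i)

lemma gram_isHermitian {p n : ℕ} (Z : Matrix (Fin p) (Fin n) ℝ) : (Z * Zᵀ).IsHermitian := by
  have h := Matrix.isHermitian_mul_conjTranspose_self Z
  rwa [Matrix.conjTranspose_eq_transpose_of_trivial] at h

/-- ESD of the Gram matrix `Z Zᵀ`. -/
def esdGram {p n : ℕ} (Z : Matrix (Fin p) (Fin n) ℝ) : Measure ℝ :=
  esd (Z * Zᵀ) (gram_isHermitian Z)

/-- Weak convergence of a sequence of measures on ℝ. -/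
def WeakLim (μs : ℕ → Measure ℝ) (μ : Measure ℝ) : Prop :=
  ∀ f : BoundedContinuousFunction ℝ ℝ,
    Tendsto (fun n => ∫ v, f v ∂(μs n)) atTop (𝓝 (∫ v, f v ∂μ))

/-- Truncation `x 1{|x| ≤ t}` at a (possibly infinite) level `t`. -/
def trunc (t : ℝ≥0∞) (v : ℝ) : ℝ := if ENNReal.ofReal |v| ≤ t then v else 0

/-- `P` is a partition of `{1, …, m}`. -/
def IsPart (m : ℕ) (P : Finset (Finset ℕ)) : Prop :=
  (∀ B ∈ P, B.Nonempty) ∧ (∀ B ∈ P, B ⊆ Finset.Icc 1 m) ∧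
    (∀ B ∈ P, ∀ C ∈ P, B ≠ C → Disjoint B C) ∧
    (∀ x ∈ Finset.Icc 1 m, ∃ B ∈ P, x ∈ B)

/-- All partitions of `{1, …, m}`. -/
def partitionsOf (m : ℕ) : Finset (Finset (Finset ℕ)) :=
  ((Finset.Icc 1 m).powerset.powerset).filter (IsPart m)

/-- Least element of a finite set of naturals (`0` for the empty set). -/
def minOf (B : Finset ℕ) : ℕ := B.min.untopD 0

/-- Every maximal run of consecutive integers in `B` has even length,
i.e. `B` is a union of sets of even sizes of consecutive integers. -/
def EvenRuns (B : Finset ℕ) : Prop :=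
  ∀ a b : ℕ, a ≤ b → (∀ x, a ≤ x → x ≤ b → x ∈ B) → (a - 1) ∉ B → (b + 1) ∉ B →
    Even (b + 1 - a)

/-- A special symmetric partition of `{1, …, 2k}`. -/
def SpecialSymmetric (k : ℕ) (P : Finset (Finset ℕ)) : Prop :=
  IsPart (2 * k) P ∧
  (∀ B ∈ P, (∀ C ∈ P, C.min ≤ B.min) → EvenRuns B) ∧
  (∀ V ∈ P, ∀ W ∈ P, V ≠ W → ∀ u ∈ V, ∀ v ∈ V, u < v → (∀ x ∈ V, ¬(u < x ∧ x < v)) →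
    (W.filter (fun w => u < w ∧ w < v ∧ Odd w)).card
      = (W.filter (fun w => u < w ∧ w < v ∧ Even w)).card)

/-- The special symmetric partitions of `{1,…,2k}` (as a finite set). -/
def SSpart (k : ℕ) : Finset (Finset (Finset ℕ)) :=
  (partitionsOf (2 * k)).filter (SpecialSymmetric k)

/-- The special symmetric partitions of `{1,…,2k}` with exactly `b` blocks. -/
def SSb (k b : ℕ) : Finset (Finset (Finset ℕ)) :=
  (SSpart k).filter (fun P => P.card = b)

/-- Number `r` of blocks with even least element ("`r+1` even generating vertices"). -/
def evenGenCount (P : Finset (Finset ℕ)) : ℕ :=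
  (P.filter (fun B => Even (minOf B))).card

/-- Extend a map on `{0,…,2k}` (coded as `Fin (2k+1)`) to all of ℕ. -/
def ext' {m : ℕ} (π : Fin (m + 1) → ℕ) (i : ℕ) : ℕ :=
  if h : i < m + 1 then π ⟨i, h⟩ else 0

/-- The set of S-circuits of length `2k` matching a partition `σ` of `{1,…,2k}`. -/
def PiS (p n k : ℕ) (σ : Finset (Finset ℕ)) : Set (Fin (2 * k + 1) → ℕ) :=
  { π | ext' π 0 = ext' π (2 * k) ∧
      (∀ i : ℕ, i ≤ 2 * k →
        (Even i → 1 ≤ ext' π i ∧ ext' π i ≤ p) ∧ (Odd i → 1 ≤ ext' π i ∧ ext' π i ≤ n)) ∧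
      (∀ i ∈ Finset.Icc 1 (2 * k), ∀ j ∈ Finset.Icc 1 (2 * k),
        ((∃ B ∈ σ, i ∈ B ∧ j ∈ B) ↔
          ((ext' π (i - 1), ext' π i) = (ext' π (j - 1), ext' π j) ∨
            (ext' π (i - 1), ext' π i) = (ext' π j, ext' π (j - 1))))) }

/-- The set of W-circuits of length `2k` (Wigner link function) matching `σ`. -/
def PiW (n k : ℕ) (σ : Finset (Finset ℕ)) : Set (Fin (2 * k + 1) → ℕ) :=
  { π | ext' π 0 = ext' π (2 * k) ∧
      (∀ i : ℕ, i ≤ 2 * k → 1 ≤ ext' π i ∧ ext' π i ≤ n) ∧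
      (∀ i ∈ Finset.Icc 1 (2 * k), ∀ j ∈ Finset.Icc 1 (2 * k),
        ((∃ B ∈ σ, i ∈ B ∧ j ∈ B) ↔
          Sym2.mk (ext' π (i - 1)) (ext' π i) = Sym2.mk (ext' π (j - 1)) (ext' π j))) }

/-- Positions `i, j ∈ {0,…,2k}` carry the same value in every circuit of `Π_S(σ)`. -/
def SameVal (k : ℕ) (σ : Finset (Finset ℕ)) (i j : ℕ) : Prop :=
  ∀ p n : ℕ, ∀ π ∈ PiS p n k σ, ext' π i = ext' π j

/-- Canonical representative (least equivalent position) of position `i`. -/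
def rep (k : ℕ) (σ : Finset (Finset ℕ)) (i : ℕ) : Fin (2 * k + 1) :=
  ⟨min (sInf {j | SameVal k σ i j}) (2 * k), by omega⟩

/-- The quantity `I_y(σ)`: `y^r` times the integral over `[0,1]^{b+1}` of the product over
the blocks of `σ` of `g_{|B|}` evaluated at the variables of the generating vertices
corresponding to the first appearance of each block.  (Assigning one variable to each
position and identifying forced-equal positions gives the same value as integrating over
one variable per generating vertex.) -/
def Iy (k : ℕ) (y : ℝ) (g : ℕ → ℝ → ℝ → ℝ) (σ : Finset (Finset ℕ)) : ℝ :=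
  y ^ evenGenCount σ *
    ∫ x : Fin (2 * k + 1) → ℝ,
      (∏ B ∈ σ, g B.card (x (rep k σ (minOf B - 1))) (x (rep k σ (minOf B))))
      ∂(Measure.pi fun _ => volume.restrict (Set.Icc (0 : ℝ) 1))

/-- sup of `|g|` over `[0,1]²`. -/
def Msup (g : ℝ → ℝ → ℝ) : ℝ :=
  sSup ((fun z : ℝ × ℝ => |g z.1 z.2|) '' (Set.Icc (0 : ℝ) 1 ×ˢ Set.Icc (0 : ℝ) 1))

/-- `M_m`: sup norm of `g_{m}` for even `m` (here `g k` codes `g_{2k}`), `0` for odd `m`. -/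
def Mval (g : ℕ → ℝ → ℝ → ℝ) (m : ℕ) : ℝ :=
  if Even m then Msup (g (m / 2)) else 0

/-- `α_{2k} = Σ_{σ ∈ P(2k)} M_σ`. -/
def alphaCarleman (g : ℕ → ℝ → ℝ → ℝ) (m : ℕ) : ℝ :=
  ∑ P ∈ partitionsOf m, ∏ B ∈ P, Mval g B.card

/-- Assumption A for the triangular array `x`, truncation levels `t`,
pre-limit functions `gn` (where `gn k n` codes `g_{2k,n}`) and limit functions
`g` (where `g k` codes `g_{2k}`), with aspect ratio `y`. -/
structure AssumpA {Ω : Type*} [MeasurableSpace Ω] (Pr : Measure Ω) (y : ℝ) (p : ℕ → ℕ)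
    (x : (n : ℕ) → Fin (p n) → Fin n → Ω → ℝ) (t : ℕ → ℝ≥0∞)
    (gn : ℕ → ℕ → ℝ → ℝ → ℝ) (g : ℕ → ℝ → ℝ → ℝ) : Prop where
  prob : IsProbabilityMeasure Pr
  ypos : 0 < y
  ratio : Tendsto (fun n => (p n : ℝ) / n) atTop (𝓝 y)
  meas : ∀ n i j, Measurable (x n i j)
  indep : ∀ n, iIndepFun
    (fun ij : Fin (p n) × Fin n => x n ij.1 ij.2) Pr
  gn_bdd : ∀ k n, ∃ M : ℝ, ∀ a ∈ Set.Icc (0 : ℝ) 1, ∀ b ∈ Set.Icc (0 : ℝ) 1,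
    |gn k n a b| ≤ M
  gn_riemann : ∀ k n,
    volume {z : ℝ × ℝ | z ∈ Set.Icc (0 : ℝ) 1 ×ˢ Set.Icc (0 : ℝ) 1 ∧
      ¬ ContinuousWithinAt (fun w : ℝ × ℝ => gn k n w.1 w.2)
          (Set.Icc (0 : ℝ) 1 ×ˢ Set.Icc (0 : ℝ) 1) z} = 0
  moment_even : ∀ k : ℕ, 1 ≤ k → ∀ n : ℕ, 1 ≤ n → ∀ i j,
    (n : ℝ) * ∫ ω, (trunc (t n) (x n i j ω)) ^ (2 * k) ∂Pr
      = gn k n (((i : ℕ) + 1) / (p n)) (((j : ℕ) + 1) / n)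
  moment_odd : ∀ k : ℕ, 1 ≤ k → ∀ α : ℝ, α < 1 →
    Tendsto (fun n : ℕ => (n : ℝ) ^ α *
      ⨆ i : Fin (p n), ⨆ j : Fin n,
        |∫ ω, (trunc (t n) (x n i j ω)) ^ (2 * k - 1) ∂Pr|) atTop (𝓝 0)
  g_unif : ∀ k, TendstoUniformlyOn (fun n (z : ℝ × ℝ) => gn k n z.1 z.2)
    (fun z : ℝ × ℝ => g k z.1 z.2) atTop (Set.Icc (0 : ℝ) 1 ×ˢ Set.Icc (0 : ℝ) 1)
  carleman : ¬ Summable (fun k : ℕ =>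
    (alphaCarleman g (2 * (k + 1))) ^ (-(1 / (2 * ((k : ℝ) + 1)))))

/-- The truncated matrix `Z_p` as a random matrix. -/
def Zmat {Ω : Type*} (p : ℕ → ℕ) (x : (n : ℕ) → Fin (p n) → Fin n → Ω → ℝ)
    (t : ℕ → ℝ≥0∞) (n : ℕ) (ω : Ω) : Matrix (Fin (p n)) (Fin n) ℝ :=
  Matrix.of fun i j => trunc (t n) (x n i j ω)

end
noncomputable section

lemma isHermitian_of_transpose_eq {m : ℕ} {A : Matrix (Fin m) (Fin m) ℝ}
    (h : Aᵀ = A) : A.IsHermitian := by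
  show Aᴴ = A
  rw [Matrix.conjTranspose_eq_transpose_of_trivial]
  exact h

lemma smulGram_isHermitian {p n : ℕ} (c : ℝ) (Z : Matrix (Fin p) (Fin n) ℝ) :
    (c • (Z * Zᵀ)).IsHermitian := by
  show _ᴴ = _
  rw [Matrix.conjTranspose_eq_transpose_of_trivial, Matrix.transpose_smul,
    Matrix.transpose_mul, Matrix.transpose_transpose]

/-- Symmetrization: the symmetric matrix whose `(i,j)` entry, for `i ≤ j`, is `f i j`. -/
def symMat (n : ℕ) (f : Fin n → Fin n → ℝ) : Matrix (Fin n) (Fin n) ℝ :=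
  Matrix.of fun i j => if (i : ℕ) ≤ (j : ℕ) then f i j else f j i

lemma symMat_isHermitian (n : ℕ) (f : Fin n → Fin n → ℝ) : (symMat n f).IsHermitian := by
  apply isHermitian_of_transpose_eq
  ext i j
  simp only [Matrix.transpose_apply, symMat, Matrix.of_apply]
  by_cases h1 : (j : ℕ) ≤ (i : ℕ) <;> by_cases h2 : (i : ℕ) ≤ (j : ℕ) <;>
    simp only [h1, h2, if_true, if_false]
  · have : i = j := Fin.ext (le_antisymm h2 h1)
    subst this; rfl
  · omega

/-- A partition (as a finite set of blocks) is non-crossing. -/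
def NonCrossing (P : Finset (Finset ℕ)) : Prop :=
  ¬ ∃ a b c d : ℕ, a < b ∧ b < c ∧ c < d ∧
    ∃ B ∈ P, ∃ C ∈ P, B ≠ C ∧ a ∈ B ∧ c ∈ B ∧ b ∈ C ∧ d ∈ C

/-- `α_{m} = Σ_{σ ∈ E(m)} C_σ`, the multiplicative extension of `C` summed over
partitions with all blocks of even size. -/
def alphaE (C : ℕ → ℝ) (m : ℕ) : ℝ :=
  ∑ P ∈ (partitionsOf m).filter (fun P => ∀ B ∈ P, Even B.card), ∏ B ∈ P, C B.card

/-- `v² 1{|v| > t}`. -/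
def tailSq (t : ℝ≥0∞) (v : ℝ) : ℝ := if ENNReal.ofReal |v| ≤ t then 0 else v ^ 2

/-- The (untruncated) random matrix with entries `x n i j`. -/
def Xmat {Ω : Type*} (p : ℕ → ℕ) (x : (n : ℕ) → Fin (p n) → Fin n → Ω → ℝ)
    (n : ℕ) (ω : Ω) : Matrix (Fin (p n)) (Fin n) ℝ :=
  Matrix.of fun i j => x n i j ω

end
noncomputable section
/-- The edge (unordered pair of consecutive values) of a circuit at position `i`. -/
def edgeOf {k : ℕ} (π : Fin (2 * k + 1) → ℕ) (i : ℕ) : Sym2 ℕ :=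
  Sym2.mk (ext' π (i - 1)) (ext' π i)

/-- Quadruples of jointly- and cross-matched W-circuits of length `2k` with vertices in
`{1,…,n}` and exactly `b` distinct edge values. -/
def QuadSet (n k b : ℕ) : Set (Fin 4 → Fin (2 * k + 1) → ℕ) :=
  { χ |
    (∀ a, ext' (χ a) 0 = ext' (χ a) (2 * k) ∧
      ∀ i : ℕ, i ≤ 2 * k → 1 ≤ ext' (χ a) i ∧ ext' (χ a) i ≤ n) ∧
    -- jointly matched
    (∀ a, ∀ i ∈ Finset.Icc 1 (2 * k), ∃ a', ∃ i' ∈ Finset.Icc 1 (2 * k),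
      (a, i) ≠ (a', i') ∧ edgeOf (χ a) i = edgeOf (χ a') i') ∧
    -- cross matched
    (∀ a, ∃ i ∈ Finset.Icc 1 (2 * k), ∃ a', a' ≠ a ∧
      ∃ i' ∈ Finset.Icc 1 (2 * k), edgeOf (χ a) i = edgeOf (χ a') i') ∧
    -- exactly `b` distinct edge values
    (((Finset.univ : Finset (Fin 4)) ×ˢ Finset.Icc 1 (2 * k)).image
        (fun q => edgeOf (χ q.1) q.2)).card = b }
end

noncomputable section QCaux

/-- Reachability from `v0` in exactly `m` steps along edges in `E`. -/
def QCreach (E : Finset (Sym2 ℕ)) (v0 : ℕ) : ℕ → ℕ → Prop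
  | 0, v => v = v0
  | (m+1), v => ∃ u, QCreach E v0 m u ∧ Sym2.mk u v ∈ E

lemma QCreach_of_rtg (E : Finset (Sym2 ℕ)) (v0 w : ℕ)
    (h : Relation.ReflTransGen (fun u v => Sym2.mk u v ∈ E) v0 w) :
    ∃ m, QCreach E v0 m w := by
  induction h with
  | refl => exact ⟨0, rfl⟩
  | tail _ hbc ih =>
    obtain ⟨m, hm⟩ := ih
    exact ⟨m + 1, _, hm, hbc⟩

lemma rtg_of_QCreach (E : Finset (Sym2 ℕ)) (v0 : ℕ) (m : ℕ) :
    ∀ w, QCreach E v0 m w →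
      Relation.ReflTransGen (fun u v => Sym2.mk u v ∈ E) v0 w := by
  induction m with
  | zero => intro w hw; cases hw; rfl
  | succ m ih =>
    rintro w ⟨u, hu, he⟩
    exact (ih u hu).tail he

/-- Spanning-tree style injection: each vertex connected to `v0` (other than `v0`)
gets its own edge. -/
lemma QCcore (E : Finset (Sym2 ℕ)) (v0 : ℕ) :
    ∃ f : ℕ → Sym2 ℕ,
      (Set.InjOn f {w | w ≠ v0 ∧
        Relation.ReflTransGen (fun u v => Sym2.mk u v ∈ E) v0 w}) ∧
      ∀ w, w ≠ v0 →
        Relation.ReflTransGen (fun u v => Sym2.mk u v ∈ E) v0 w →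
        f w ∈ E ∧ ∃ u, f w = Sym2.mk u w ∧
          Relation.ReflTransGen (fun u v => Sym2.mk u v ∈ E) v0 u := by
  set R := fun u v => Sym2.mk u v ∈ E with hR
  -- distance
  set d : ℕ → ℕ := fun w => if h : ∃ m, QCreach E v0 m w then Nat.find h else 0 with hd
  have hdspec : ∀ w, (∃ m, QCreach E v0 m w) → QCreach E v0 (d w) w := by
    intro w h; simp only [hd, dif_pos h]; exact Nat.find_spec h
  have hdmin : ∀ w m, QCreach E v0 m w → d w ≤ m := by
    intro w m hm
    have h : ∃ m, QCreach E v0 m w := ⟨m, hm⟩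
    simp only [hd, dif_pos h]; exact Nat.find_min' h hm
  -- for each reachable w ≠ v0, d w > 0 and we can pick a predecessor
  have key : ∀ w, w ≠ v0 → Relation.ReflTransGen R v0 w →
      ∃ u, Sym2.mk u w ∈ E ∧ d u < d w ∧ Relation.ReflTransGen R v0 u := by
    intro w hw hrt
    obtain ⟨m, hm⟩ := QCreach_of_rtg E v0 w hrt
    have hdw : QCreach E v0 (d w) w := hdspec w ⟨m, hm⟩
    have hdpos : d w ≠ 0 := by
      intro h0
      rw [h0] at hdw
      exact hw hdw
    obtain ⟨m', hm'⟩ : ∃ m', d w = m' + 1 := ⟨d w - 1, by omega⟩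
    rw [hm'] at hdw
    obtain ⟨u, hu, he⟩ := hdw
    refine ⟨u, he, ?_, rtg_of_QCreach E v0 m' u hu⟩
    have := hdmin u m' hu
    omega
  choose g hg1 hg2 hg3 using key
  refine ⟨fun w => if h : w ≠ v0 ∧ Relation.ReflTransGen R v0 w
    then Sym2.mk (g w h.1 h.2) w else Sym2.mk w w, ?_, ?_⟩
  · rintro w ⟨hw1, hw2⟩ w' ⟨hw1', hw2'⟩ heq
    simp only [dif_pos (And.intro hw1 hw2), dif_pos (And.intro hw1' hw2')] at heq
    replace heq := (Sym2.mk_eq_mk_iff (p := (_, _)) (q := (_, _))).mp heq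
    rcases heq with heq | heq
    · exact (Prod.ext_iff.mp heq).2
    · -- swapped: g w = w' and w = g w'
      rw [Prod.ext_iff] at heq
      simp only [Prod.fst_swap, Prod.snd_swap] at heq
      have h1 : g w hw1 hw2 = w' := heq.1
      have h2 : w = g w' hw1' hw2' := heq.2
      have ha := hg2 w hw1 hw2
      have hb := hg2 w' hw1' hw2'
      rw [h1] at ha
      rw [← h2] at hb
      omega
  · intro w hw hrt
    refine ⟨?_, g w hw hrt, by simp [hw, hrt], hg3 w hw hrt⟩
    simp only [dif_pos (And.intro hw hrt)]
    exact hg1 w hw hrt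


lemma QCtwoComp (E : Finset (Sym2 ℕ)) (V : Finset ℕ) (s0 s1 : ℕ)
    (hcov : ∀ v ∈ V,
      Relation.ReflTransGen (fun u v => Sym2.mk u v ∈ E) s0 v ∨
      Relation.ReflTransGen (fun u v => Sym2.mk u v ∈ E) s1 v) :
    V.card ≤ E.card + 2 := by
  set R := fun u v => Sym2.mk u v ∈ E with hR
  obtain ⟨f0, hf0inj, hf0⟩ := QCcore E s0
  obtain ⟨f1, hf1inj, hf1⟩ := QCcore E s1
  set C0 : ℕ → Prop := fun v => Relation.ReflTransGen R s0 v with hC0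
  set V0 := V.filter C0 with hV0
  set V1 := V.filter (fun v => ¬ C0 v) with hV1
  have hV1conn : ∀ v ∈ V1, Relation.ReflTransGen R s1 v := by
    intro v hv
    rw [hV1, Finset.mem_filter] at hv
    rcases hcov v hv.1 with h | h
    · exact absurd h hv.2
    · exact h
  set W := (V0.erase s0) ∪ (V1.erase s1) with hW
  set F : ℕ → Sym2 ℕ := fun w => if C0 w then f0 w else f1 w with hF
  -- F maps W into E injectively
  have hmem : ∀ w ∈ W, F w ∈ E := by
    intro w hw
    rw [hW, Finset.mem_union] at hw
    rcases hw with hw | hw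
    · rw [Finset.mem_erase, hV0, Finset.mem_filter] at hw
      have := (hf0 w hw.1 hw.2.2).1
      simpa [hF, hw.2.2] using this
    · rw [Finset.mem_erase] at hw
      have hnc : ¬ C0 w := (Finset.mem_filter.mp hw.2).2
      have := (hf1 w hw.1 (hV1conn w hw.2)).1
      simpa [hF, hnc] using this
  have hinj : Set.InjOn F W := by
    intro w hw w' hw' heq
    rw [Finset.coe_union, Set.mem_union] at hw hw'
    -- characterize membership
    have mem0 : ∀ x, (x ∈ (V0.erase s0 : Finset ℕ)) → x ≠ s0 ∧ C0 x ∧ x ∈ V := by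
      intro x hx; rw [Finset.mem_erase, hV0, Finset.mem_filter] at hx
      exact ⟨hx.1, hx.2.2, hx.2.1⟩
    have mem1 : ∀ x, (x ∈ (V1.erase s1 : Finset ℕ)) → x ≠ s1 ∧ ¬ C0 x ∧
        Relation.ReflTransGen R s1 x := by
      intro x hx; rw [Finset.mem_erase] at hx
      exact ⟨hx.1, (Finset.mem_filter.mp hx.2).2, hV1conn x hx.2⟩
    -- mixed case is impossible
    have mixed : ∀ x y, x ≠ s0 → C0 x → y ≠ s1 → ¬ C0 y →
        Relation.ReflTransGen R s1 y → f0 x = f1 y → False := by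
      intro x y hx1 hx2 hy1 hy2 hy3 hxy
      obtain ⟨u, hu, hu2⟩ := (hf0 x hx1 hx2).2
      obtain ⟨u', hu', _⟩ := (hf1 y hy1 hy3).2
      rw [hxy, hu'] at hu
      replace hu := (Sym2.mk_eq_mk_iff (p := (_, _)) (q := (_, _))).mp hu
      rcases hu with hu | hu
      · have : y = x := (Prod.ext_iff.mp hu).2
        rw [← this] at hx2; exact hy2 hx2
      · rw [Prod.ext_iff] at hu
        simp only [Prod.fst_swap, Prod.snd_swap] at hu
        rw [← hu.2] at hu2
        exact hy2 hu2
    rcases hw with hw | hw <;> rcases hw' with hw' | hw'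
    · obtain ⟨h1, h2, _⟩ := mem0 w hw
      obtain ⟨h1', h2', _⟩ := mem0 w' hw'
      simp only [hF, if_pos h2, if_pos h2'] at heq
      exact hf0inj ⟨h1, h2⟩ ⟨h1', h2'⟩ heq
    · obtain ⟨h1, h2, _⟩ := mem0 w hw
      obtain ⟨h1', h2', h3'⟩ := mem1 w' hw'
      simp only [hF, if_pos h2, if_neg h2'] at heq
      exact absurd heq (fun h => (mixed w w' h1 h2 h1' h2' h3' h).elim)
    · obtain ⟨h1', h2', _⟩ := mem0 w' hw'
      obtain ⟨h1, h2, h3⟩ := mem1 w hw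
      simp only [hF, if_neg h2, if_pos h2'] at heq
      exact absurd heq.symm (fun h => (mixed w' w h1' h2' h1 h2 h3 h).elim)
    · obtain ⟨h1, h2, h3⟩ := mem1 w hw
      obtain ⟨h1', h2', h3'⟩ := mem1 w' hw'
      simp only [hF, if_neg h2, if_neg h2'] at heq
      exact hf1inj ⟨h1, h3⟩ ⟨h1', h3'⟩ heq
  have hWcard : W.card ≤ E.card := by
    classical
    have := Finset.card_le_card_of_injOn F (fun w hw => hmem w hw) hinj
    exact this
  -- V ⊆ W ∪ {s0, s1}
  have hsub : V ⊆ W ∪ {s0, s1} := by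
    intro v hv
    by_cases h0 : C0 v
    · by_cases hs : v = s0
      · subst hs; simp
      · refine Finset.mem_union_left _ (Finset.mem_union_left _ ?_)
        rw [Finset.mem_erase, hV0, Finset.mem_filter]
        exact ⟨hs, hv, h0⟩
    · by_cases hs : v = s1
      · subst hs; simp
      · refine Finset.mem_union_left _ (Finset.mem_union_right _ ?_)
        rw [Finset.mem_erase, hV1, Finset.mem_filter]
        exact ⟨hs, hv, h0⟩
  calc V.card ≤ (W ∪ {s0, s1}).card := Finset.card_le_card hsub
    _ ≤ W.card + ({s0, s1} : Finset ℕ).card := Finset.card_union_le _ _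
    _ ≤ E.card + 2 := by
        have : ({s0, s1} : Finset ℕ).card ≤ 2 := Finset.card_insert_le _ _ |>.trans (by simp)
        omega
lemma QCfin4 (conn : Fin 4 → Fin 4 → Prop) (hrefl : ∀ a, conn a a)
    (hsymm : ∀ {a b}, conn a b → conn b a)
    (htrans : ∀ {a b c}, conn a b → conn b c → conn a c)
    (hmatch : ∀ a, ∃ a', a' ≠ a ∧ conn a a') :
    ∃ a0 a1, ∀ a, conn a a0 ∨ conn a a1 := by
  by_cases hall : ∀ a, conn a 0
  · exact ⟨0, 0, fun a => Or.inl (hall a)⟩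
  · push_neg at hall
    obtain ⟨a1, ha1⟩ := hall
    refine ⟨0, a1, fun a => ?_⟩
    by_contra hcon
    push_neg at hcon
    obtain ⟨hc0, hc1⟩ := hcon
    obtain ⟨p, hp, hcp⟩ := hmatch a
    obtain ⟨q, hq, hcq⟩ := hmatch a1
    have hane0 : a ≠ 0 := fun h => hc0 (h ▸ hrefl a)
    have ha1ne0 : a1 ≠ 0 := fun h => ha1 (h ▸ hrefl a1)
    have hanea1 : a ≠ a1 := fun h => hc1 (h ▸ hrefl a)
    have hpne0 : p ≠ 0 := fun h => hc0 (h ▸ hcp)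
    have hpnea1 : p ≠ a1 := fun h => hc1 (h ▸ hcp)
    have hqne0 : q ≠ 0 := fun h => ha1 (h ▸ hcq)
    have hqnea : q ≠ a := fun h => hc1 (hsymm (h ▸ hcq))
    have hqnep : q ≠ p := fun h => hc1 (htrans hcp (hsymm (h ▸ hcq)))
    -- five pairwise-distinct elements of `Fin 4`
    have v1 : a.val ≠ 0 := fun h => hane0 (Fin.ext h)
    have v2 : a1.val ≠ 0 := fun h => ha1ne0 (Fin.ext h)
    have v3 : a.val ≠ a1.val := fun h => hanea1 (Fin.ext h)
    have v4 : p.val ≠ 0 := fun h => hpne0 (Fin.ext h)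
    have v5 : p.val ≠ a1.val := fun h => hpnea1 (Fin.ext h)
    have v6 : p.val ≠ a.val := fun h => hp (Fin.ext h)
    have v7 : q.val ≠ 0 := fun h => hqne0 (Fin.ext h)
    have v8 : q.val ≠ a.val := fun h => hqnea (Fin.ext h)
    have v9 : q.val ≠ a1.val := fun h => hq (Fin.ext h)
    have v10 : q.val ≠ p.val := fun h => hqnep (Fin.ext h)
    have w1 : a.val < 4 := a.isLt
    have w2 : a1.val < 4 := a1.isLt
    have w3 : p.val < 4 := p.isLt
    have w4 : q.val < 4 := q.isLt
    omega

end QCaux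

noncomputable section QCmain
open Finset

variable {n k b : ℕ}

/-- The edge finset of a quadruple. -/
def QE {k : ℕ} (χ : Fin 4 → Fin (2 * k + 1) → ℕ) : Finset (Sym2 ℕ) :=
  ((Finset.univ : Finset (Fin 4)) ×ˢ Finset.Icc 1 (2 * k)).image
    (fun q => edgeOf (χ q.1) q.2)

/-- The vertex finset of a quadruple. -/
def QV {k : ℕ} (χ : Fin 4 → Fin (2 * k + 1) → ℕ) : Finset ℕ :=
  ((Finset.univ : Finset (Fin 4)) ×ˢ Finset.range (2 * k + 1)).image
    (fun q => ext' (χ q.1) q.2)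

lemma QCwithin {k : ℕ} (χ : Fin 4 → Fin (2 * k + 1) → ℕ) (a : Fin 4) :
    ∀ i : ℕ, i ≤ 2 * k →
      Relation.ReflTransGen (fun u v => Sym2.mk u v ∈ QE χ)
        (ext' (χ a) 0) (ext' (χ a) i) := by
  intro i
  induction i with
  | zero => intro _; exact Relation.ReflTransGen.refl
  | succ i ih =>
    intro hi
    refine (ih (by omega)).tail ?_
    have hmem : edgeOf (χ a) (i + 1) ∈ QE χ := by
      refine Finset.mem_image.mpr ⟨(a, i + 1), ?_, rfl⟩
      simp [Finset.mem_product, Finset.mem_Icc]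
      omega
    have : edgeOf (χ a) (i + 1) = Sym2.mk (ext' (χ a) i) (ext' (χ a) (i + 1)) := by
      simp [edgeOf]
    rwa [this] at hmem

lemma QCsymmR {k : ℕ} (χ : Fin 4 → Fin (2 * k + 1) → ℕ) :
    Symmetric (fun u v => Sym2.mk u v ∈ QE χ) := by
  intro u v h
  simpa [Sym2.eq_swap] using h

lemma QCsharedConn {k : ℕ} (χ : Fin 4 → Fin (2 * k + 1) → ℕ) {a a' : Fin 4} {i i' : ℕ}
    (hi : i ∈ Finset.Icc 1 (2 * k)) (hi' : i' ∈ Finset.Icc 1 (2 * k))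
    (h : edgeOf (χ a) i = edgeOf (χ a') i') :
    Relation.ReflTransGen (fun u v => Sym2.mk u v ∈ QE χ)
      (ext' (χ a) 0) (ext' (χ a') 0) := by
  rw [Finset.mem_Icc] at hi hi'
  have hsym : Symmetric (Relation.ReflTransGen (fun u v => Sym2.mk u v ∈ QE χ)) := fun a b h => @Std.Symm.symm _ _ (@Relation.ReflTransGen.stdSymm _ (fun u v => Sym2.mk u v ∈ QE χ) ⟨fun x y h => QCsymmR χ h⟩) a b h
  have h1 := QCwithin χ a i hi.2
  have h2 := QCwithin χ a' i' hi'.2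
  have hE : edgeOf (χ a') i' ∈ QE χ := by
    refine Finset.mem_image.mpr ⟨(a', i'), ?_, rfl⟩
    simp [Finset.mem_product, Finset.mem_Icc]
    omega
  have key : Relation.ReflTransGen (fun u v => Sym2.mk u v ∈ QE χ)
      (ext' (χ a) i) (ext' (χ a') i') := by
    have h' := h
    unfold edgeOf at h'
    replace h' := (Sym2.mk_eq_mk_iff (p := (ext' (χ a) (i - 1), ext' (χ a) i)) (q := (ext' (χ a') (i' - 1), ext' (χ a') i'))).mp h'
    rcases h' with h' | h'
    · rw [show ext' (χ a) i = ext' (χ a') i' from congrArg Prod.snd h']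
    · rw [Prod.ext_iff] at h'
      simp only [Prod.fst_swap, Prod.snd_swap] at h'
      rw [h'.2]
      refine Relation.ReflTransGen.single ?_
      have : edgeOf (χ a') i' = Sym2.mk (ext' (χ a') (i' - 1)) (ext' (χ a') i') := rfl
      rw [this] at hE
      exact hE
  exact (h1.trans key).trans (hsym h2)

lemma QV_card_le {n k b : ℕ} {χ : Fin 4 → Fin (2 * k + 1) → ℕ}
    (hχ : χ ∈ QuadSet n k b) : (QV χ).card ≤ b + 2 := by
  obtain ⟨hbound, hjoint, hcross, hcard⟩ := hχ
  set R := fun u v => Sym2.mk u v ∈ QE χ with hR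
  have hsym : Symmetric (Relation.ReflTransGen (fun u v => Sym2.mk u v ∈ QE χ)) := fun a b h => @Std.Symm.symm _ _ (@Relation.ReflTransGen.stdSymm _ (fun u v => Sym2.mk u v ∈ QE χ) ⟨fun x y h => QCsymmR χ h⟩) a b h
  set conn : Fin 4 → Fin 4 → Prop :=
    fun a a' => Relation.ReflTransGen R (ext' (χ a) 0) (ext' (χ a') 0) with hconn
  have hrefl : ∀ a, conn a a := fun a => Relation.ReflTransGen.refl
  have hsymm : ∀ {a a'}, conn a a' → conn a' a := fun h => hsym h
  have htrans : ∀ {a a' a''}, conn a a' → conn a' a'' → conn a a'' :=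
    fun h h' => h.trans h'
  have hmatch : ∀ a, ∃ a', a' ≠ a ∧ conn a a' := by
    intro a
    obtain ⟨i, hi, a', ha', i', hi', he⟩ := hcross a
    exact ⟨a', ha', QCsharedConn χ hi hi' he⟩
  obtain ⟨a0, a1, hcov⟩ := QCfin4 conn hrefl hsymm htrans hmatch
  have hVcov : ∀ v ∈ QV χ,
      Relation.ReflTransGen R (ext' (χ a0) 0) v ∨
      Relation.ReflTransGen R (ext' (χ a1) 0) v := by
    intro v hv
    obtain ⟨⟨a, i⟩, hq, rfl⟩ := Finset.mem_image.mp hv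
    rw [Finset.mem_product, Finset.mem_range] at hq
    have hw := QCwithin χ a i (by omega)
    rcases hcov a with h | h
    · exact Or.inl ((hsym h).trans hw)
    · exact Or.inr ((hsym h).trans hw)
  have := QCtwoComp (QE χ) (QV χ) (ext' (χ a0) 0) (ext' (χ a1) 0) hVcov
  rw [show (QE χ).card = b from hcard] at this
  exact this

lemma QV_mem {k : ℕ} (χ : Fin 4 → Fin (2 * k + 1) → ℕ) (a : Fin 4) (i : Fin (2 * k + 1)) :
    ext' (χ a) i.val ∈ QV χ := by
  refine Finset.mem_image.mpr ⟨(a, i.val), ?_, rfl⟩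
  simp [Finset.mem_product, Finset.mem_range, i.isLt]

lemma QV_bounds {n k b : ℕ} {χ : Fin 4 → Fin (2 * k + 1) → ℕ} (hχ : χ ∈ QuadSet n k b) :
    ∀ v ∈ QV χ, 1 ≤ v ∧ v ≤ n := by
  intro v hv
  obtain ⟨⟨a, i⟩, hq, rfl⟩ := Finset.mem_image.mp hv
  rw [Finset.mem_product, Finset.mem_range] at hq
  exact (hχ.1 a).2 i (by omega)

set_option maxHeartbeats 1000000 in
lemma QCencode {n k b : ℕ} (hn : 1 ≤ n) (χ : Fin 4 → Fin (2 * k + 1) → ℕ)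
    (hχ : χ ∈ QuadSet n k b) :
    ∃ (c : Fin 4 × Fin (2 * k + 1) → Fin (b + 2)) (h : Fin (b + 2) → Fin n),
      ∀ (a : Fin 4) (i : Fin (2 * k + 1)), χ a i = (h (c (a, i))).val + 1 := by
  have hVle : (QV χ).card ≤ b + 2 := QV_card_le hχ
  have iso := (QV χ).orderIsoOfFin rfl
  refine ⟨fun p => Fin.castLE hVle (iso.symm ⟨ext' (χ p.1) p.2.val, QV_mem χ p.1 p.2⟩),
    fun j => if hj : (j : ℕ) < (QV χ).card then
      ⟨((iso ⟨j.val, hj⟩ : (QV χ)) : ℕ) - 1, by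
        have h := QV_bounds hχ _ (iso ⟨j.val, hj⟩).2
        omega⟩
    else ⟨0, hn⟩, ?_⟩
  intro a i
  have hlt : ((Fin.castLE hVle
      (iso.symm ⟨ext' (χ a) i.val, QV_mem χ a i⟩)) : ℕ) < (QV χ).card :=
    (iso.symm ⟨ext' (χ a) i.val, QV_mem χ a i⟩).isLt
  simp only [dif_pos hlt]
  have hback : iso ⟨((Fin.castLE hVle
      (iso.symm ⟨ext' (χ a) i.val, QV_mem χ a i⟩)) : ℕ), hlt⟩
      = ⟨ext' (χ a) i.val, QV_mem χ a i⟩ := by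
    have heq1 : (⟨((Fin.castLE hVle
        (iso.symm ⟨ext' (χ a) i.val, QV_mem χ a i⟩)) : ℕ), hlt⟩ : Fin (QV χ).card)
        = iso.symm ⟨ext' (χ a) i.val, QV_mem χ a i⟩ := Fin.ext rfl
    rw [heq1]
    exact iso.apply_symm_apply _
  rw [hback]
  have hxb := QV_bounds hχ (ext' (χ a) i.val) (QV_mem χ a i)
  have hext : ext' (χ a) i.val = χ a i := by
    simp [ext', i.isLt]
  simp only
  omega

lemma QCcount {n k b : ℕ} (hn : 1 ≤ n) :
    Nat.card (QuadSet n k b) ≤ (b + 2) ^ (4 * (2 * k + 1)) * n ^ (b + 2) := by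
  classical
  have main : ∀ χs : QuadSet n k b,
      ∃ d : ((Fin 4 × Fin (2 * k + 1)) → Fin (b + 2)) × (Fin (b + 2) → Fin n),
      ∀ (a : Fin 4) (i : Fin (2 * k + 1)), χs.1 a i = (d.2 (d.1 (a, i))).val + 1 := by
    rintro ⟨χ, hχ⟩
    obtain ⟨c, h, hch⟩ := QCencode hn χ hχ
    exact ⟨(c, h), hch⟩
  choose φ hφ using main
  have hinj : Function.Injective φ := by
    intro χs χs' heq
    apply Subtype.ext
    funext a i
    have h1 := hφ χs a i
    have h2 := hφ χs' a i
    rw [heq] at h1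
    rw [h1, h2]
  have hcard := Nat.card_le_card_of_injective φ hinj
  have hDcard : Nat.card (((Fin 4 × Fin (2 * k + 1)) → Fin (b + 2)) ×
      (Fin (b + 2) → Fin n)) = (b + 2) ^ (4 * (2 * k + 1)) * n ^ (b + 2) := by
    rw [Nat.card_eq_fintype_card]
    simp only [Fintype.card_prod, Fintype.card_fun, Fintype.card_fin]
  rwa [hDcard] at hcard


/-- Lemma 5.4: `Q_{k,4}^b ≤ C n^{b+2}` for a constant `C` depending
only on `k`. -/
theorem quadruple_circuit_count_le
    (k : ℕ) (hk : 1 ≤ k) :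
    ∃ C : ℝ, 0 < C ∧ ∀ n b : ℕ,
      (Nat.card (QuadSet n k b) : ℝ) ≤ C * (n : ℝ) ^ (b + 2) := by
  refine ⟨((8 * k + 2 : ℕ) : ℝ) ^ (8 * k + 4), by positivity, ?_⟩
  intro n b
  rcases Nat.eq_zero_or_pos n with rfl | hn
  · have hempty : QuadSet 0 k b = ∅ := by
      ext χ
      simp only [Set.mem_empty_iff_false, iff_false]
      rintro ⟨h1, -, -, -⟩
      have := (h1 0).2 0 (by omega)
      omega
    rw [hempty]
    simp [zero_pow (show b + 2 ≠ 0 by omega)]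
  · by_cases hb : b ≤ 8 * k
    · have h1 := QCcount (k := k) (b := b) hn
      have h2 : (b + 2) ^ (4 * (2 * k + 1)) * n ^ (b + 2) ≤
          (8 * k + 2) ^ (8 * k + 4) * n ^ (b + 2) := by
        apply Nat.mul_le_mul_right
        calc (b + 2) ^ (4 * (2 * k + 1)) = (b + 2) ^ (8 * k + 4) := by ring_nf
          _ ≤ (8 * k + 2) ^ (8 * k + 4) := Nat.pow_le_pow_left (by omega) _
      have h3 : Nat.card (QuadSet n k b) ≤ (8 * k + 2) ^ (8 * k + 4) * n ^ (b + 2) :=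
        h1.trans h2
      calc (Nat.card (QuadSet n k b) : ℝ)
          ≤ (((8 * k + 2) ^ (8 * k + 4) * n ^ (b + 2) : ℕ) : ℝ) := by exact_mod_cast h3
        _ = ((8 * k + 2 : ℕ) : ℝ) ^ (8 * k + 4) * (n : ℝ) ^ (b + 2) := by push_cast; ring
    · have hempty : QuadSet n k b = ∅ := by
        ext χ
        simp only [Set.mem_empty_iff_false, iff_false]
        rintro ⟨-, -, -, h4⟩
        have hle := Finset.card_image_le (s := (Finset.univ : Finset (Fin 4)) ×ˢ
          Finset.Icc 1 (2 * k)) (f := fun q => edgeOf (χ q.1) q.2)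
        rw [h4, Finset.card_product, Nat.card_Icc] at hle
        simp [Finset.card_univ] at hle
        omega
      rw [hempty]
      have : (0 : ℝ) ≤ ((8 * k + 2 : ℕ) : ℝ) ^ (8 * k + 4) * (n : ℝ) ^ (b + 2) := by positivity
      simpa using this
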